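/- For every 0 ≤ i ≤ r_1−1, the difference φ_i − ψ_{q_1r+i} lies in the ideal of R generated by ψ_0,…,ψ_{q_1r−1}; that is, φ_i ≡ ψ_{q_1r+i} (mod (ψ_0,…,ψ_{q_1r−1})). -/

import Mathlib

open MvPolynomial Matrix

noncomputable section

namespace TB

/-- The polynomial ring `ℂ[a_0,…,a_{n-1},b_0,…,b_{r-1}]`: variable `Sum.inl i` is `a_i`
and `Sum.inr j` is `b_j`. -/
abbrev R (n r : ℕ) : Type := MvPolynomial (Fin n ⊕ Fin r) ℂ

/-- The power series `1 + (cf 1)·t + ⋯ + (cf m)·t^m`. -/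
def ser {A : Type*} [CommRing A] (m : ℕ) (cf : ℕ → A) : PowerSeries A :=
  PowerSeries.mk fun k => if k = 0 then 1 else if k ≤ m then cf k else 0

/-- `1 + a_{n-1} t + ⋯ + a_0 t^n`. -/
def Aser (n r : ℕ) : PowerSeries (R n r) :=
  ser n fun k => if h : 1 ≤ k ∧ k ≤ n then X (Sum.inl ⟨n - k, by omega⟩) else 0

/-- `1 + b_{r-1} t + ⋯ + b_0 t^r`. -/
def Bser (n r : ℕ) : PowerSeries (R n r) :=
  ser r fun k => if h : 1 ≤ k ∧ k ≤ r then X (Sum.inr ⟨r - k, by omega⟩) else 0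

/-- `1 + d_{n-1} t + ⋯ + d_0 t^n`. -/
def Dser (n r : ℕ) (d : Fin n → R n r) : PowerSeries (R n r) :=
  ser n fun k => if h : 1 ≤ k ∧ k ≤ n then d ⟨n - k, by omega⟩ else 0

/-- `1 + d_{n-1} t + ⋯ + d_1 t^{n-1}`. -/
def Dhatser (n r : ℕ) (d : Fin n → R n r) : PowerSeries (R n r) :=
  ser (n - 1) fun k => if h : 1 ≤ k ∧ k ≤ n - 1 then d ⟨n - k, by omega⟩ else 0

/-- `f(x) = x^n + a_{n-1}x^{n-1} + ⋯ + a_0`. -/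
def fpoly (n r : ℕ) : Polynomial (R n r) :=
  Polynomial.X ^ n + ∑ i : Fin n, Polynomial.C (X (Sum.inl i)) * Polynomial.X ^ (i : ℕ)

/-- `g(x) = x^r + b_{r-1}x^{r-1} + ⋯ + b_0`. -/
def gpoly (n r : ℕ) : Polynomial (R n r) :=
  Polynomial.X ^ r + ∑ j : Fin r, Polynomial.C (X (Sum.inr j)) * Polynomial.X ^ (j : ℕ)

/-- The coefficient `c_k` of `f·g`, for `0 ≤ k ≤ n+r-1`. -/
def cc (n r : ℕ) (k : Fin (n + r)) : R n r := (fpoly n r * gpoly n r).coeff (k : ℕ)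

/-- `d_0, …, d_{n-1}` are the unique polynomials with
`(1 + b_{r-1}t + ⋯ + b_0 t^r)(1 + d_{n-1}t + ⋯ + d_0 t^n) ≡ 1 + a_{n-1}t + ⋯ + a_0 t^n (mod t^{n+1})`. -/
def dSpec (n r : ℕ) (d : Fin n → R n r) : Prop :=
  ∀ k ≤ n, PowerSeries.coeff k (Bser n r * Dser n r d)
    = PowerSeries.coeff k (Aser n r)

/-- `ψ_i = d_i` for `0 ≤ i ≤ r-1`, and
`ψ_{s·r+i} = ∂^s d_{r-1} / (∂b_0^{s-1} ∂b_{r-1-i})` for `s ≥ 1`, `0 ≤ i ≤ r-1`. -/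
def psi (n r : ℕ) (hr : 0 < r) (hrn : r ≤ n) (d : Fin n → R n r) (m : ℕ) : R n r :=
  if h : m < r then d ⟨m, by omega⟩
  else
    (fun q => pderiv (Sum.inr (⟨0, hr⟩ : Fin r)) q)^[m / r - 1]
      (pderiv (Sum.inr (⟨r - 1 - m % r, by omega⟩ : Fin r)) (d ⟨r - 1, by omega⟩))

/-- The `m×m` lower shift matrix over `R n r`. -/
def Lmat (n r m : ℕ) : Matrix (Fin m) (Fin m) (R n r) :=
  Matrix.of fun i j => if (i : ℕ) = (j : ℕ) + 1 then 1 else 0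

/-- `B = I_n + b_{r-1}L_n + ⋯ + b_0 L_n^r`. -/
def Bmat (n r : ℕ) (hr : 0 < r) : Matrix (Fin n) (Fin n) (R n r) :=
  1 + ∑ k ∈ Finset.range r, (X (Sum.inr (⟨r - 1 - k, by omega⟩ : Fin r)) : R n r) • Lmat n r n ^ (k + 1)

/-- `D̂ = I_n + d_{n-1}L_n + ⋯ + d_1 L_n^{n-1}`. -/
def Dhat (n r : ℕ) (hn : 0 < n) (d : Fin n → R n r) : Matrix (Fin n) (Fin n) (R n r) :=
  1 + ∑ k ∈ Finset.range (n - 1), d ⟨n - 1 - k, by omega⟩ • Lmat n r n ^ (k + 1)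

/-- `D`: the first `r` columns of `D̂`. -/
def Dmat (n r : ℕ) (hn : 0 < n) (hrn : r ≤ n) (d : Fin n → R n r) :
    Matrix (Fin n) (Fin r) (R n r) :=
  (Dhat n r hn d).submatrix id (Fin.castLE hrn)

/-- `Â = I_n + a_{n-1}L_n + ⋯ + a_1 L_n^{n-1}`. -/
def Ahat (n r : ℕ) (hn : 0 < n) : Matrix (Fin n) (Fin n) (R n r) :=
  1 + ∑ k ∈ Finset.range (n - 1),
    (X (Sum.inl (⟨n - 1 - k, by omega⟩ : Fin n)) : R n r) • Lmat n r n ^ (k + 1)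

/-- `A`: the first `r` columns of `Â`. -/
def Amat (n r : ℕ) (hn : 0 < n) (hrn : r ≤ n) : Matrix (Fin n) (Fin r) (R n r) :=
  (Ahat n r hn).submatrix id (Fin.castLE hrn)

/-- The Jacobian matrix of a family `p` of elements of `R n r`: the row of index `i` is
`(∂p_i/∂a_{n-1}, …, ∂p_i/∂a_0, ∂p_i/∂b_{r-1}, …, ∂p_i/∂b_0)`. -/
def jac {n r : ℕ} {ι : Type*} (p : ι → R n r) : Matrix ι (Fin (n + r)) (R n r) :=
  Matrix.of fun i j =>
    if h : (j : ℕ) < n then pderiv (Sum.inl (⟨n - 1 - (j : ℕ), by omega⟩ : Fin n)) (p i)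
    else
      pderiv (Sum.inr (⟨r - 1 - ((j : ℕ) - n), by have := j.isLt; omega⟩ : Fin r)) (p i)

/-- The set of all `k×k` minors of a matrix. -/
def minorsSet {n r : ℕ} {ι : Type*} (k : ℕ) (M : Matrix ι (Fin (n + r)) (R n r)) :
    Set (R n r) :=
  { x | ∃ (ri : Fin k → ι) (ci : Fin k → Fin (n + r)), x = (M.submatrix ri ci).det }

/-- Evaluation at the origin `a_i = b_j = 0`. -/
def ev0 (n r : ℕ) : R n r →+* ℂ := eval fun _ => 0

/-- The maximal ideal `(a_0,…,a_{n-1},b_0,…,b_{r-1})`. -/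
def mIdeal (n r : ℕ) : Ideal (R n r) :=
  Ideal.span (Set.range (X : (Fin n ⊕ Fin r) → R n r))

/-- `1 + g_1 t + ⋯ + g_{r_1} t^{r_1}` over `S = ℂ[g_1,…,g_{r_1},b_0,…,b_{r-1}] = R r1 r`,
where `g_k` is the variable `Sum.inl ⟨k-1⟩`. -/
def Gser (r1 r : ℕ) : PowerSeries (R r1 r) :=
  ser r1 fun k => if h : 1 ≤ k ∧ k ≤ r1 then X (Sum.inl ⟨k - 1, by omega⟩) else 0

/-- `1 + w_{r-1} t + ⋯ + w_0 t^r`. -/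
def Wser (r1 r : ℕ) (w : Fin r → R r1 r) : PowerSeries (R r1 r) :=
  ser r fun k => if h : 1 ≤ k ∧ k ≤ r then w ⟨r - k, by omega⟩ else 0

/-- `1 + w_{r-1} t + ⋯ + w_1 t^{r-1}`. -/
def Whatser (r1 r : ℕ) (w : Fin r → R r1 r) : PowerSeries (R r1 r) :=
  ser (r - 1) fun k => if h : 1 ≤ k ∧ k ≤ r - 1 then w ⟨r - k, by omega⟩ else 0

/-- `w_0,…,w_{r-1}` are the unique polynomials with
`(1 + g_1 t + ⋯ + g_{r_1}t^{r_1})(1 + w_{r-1}t + ⋯ + w_0 t^r) ≡ 1 + b_{r-1}t + ⋯ + b_0 t^r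
(mod t^{r+1})`. -/
def wSpec (r1 r : ℕ) (w : Fin r → R r1 r) : Prop :=
  ∀ k ≤ r, PowerSeries.coeff k (Gser r1 r * Wser r1 r w)
    = PowerSeries.coeff k (Bser r1 r)

/-- `φ'_i = w_i` for `0 ≤ i ≤ r_1-1`, and
`φ'_{s·r_1+i} = ∂^s w_{r_1-1} / (∂g_{r_1}^{s-1} ∂g_{1+i})` for `s ≥ 1`, `0 ≤ i ≤ r_1-1`. -/
def phi' (r1 r : ℕ) (h1 : 0 < r1) (h2 : r1 < r) (w : Fin r → R r1 r) (m : ℕ) : R r1 r :=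
  if h : m < r1 then w ⟨m, by omega⟩
  else
    (fun q => pderiv (Sum.inl (⟨r1 - 1, by omega⟩ : Fin r1)) q)^[m / r1 - 1]
      (pderiv (Sum.inl (⟨m % r1, Nat.mod_lt m h1⟩ : Fin r1)) (w ⟨r1 - 1, by omega⟩))

/-- The substitution `g_k ↦ γ_{n-k}`, `b_j ↦ b_j`, from `S = R r1 r` to `R n r`. -/
def subst (n r r1 : ℕ) (γ : ℕ → R n r) : R r1 r →ₐ[ℂ] R n r :=
  aeval (Sum.elim (fun i : Fin r1 => γ (n - ((i : ℕ) + 1))) fun j : Fin r => X (Sum.inr j))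


/-- From `n = q_1·r + r_1` with `q_1 ≥ 1` we get `r ≤ n`. -/
theorem rle (q1 r r1 n : ℕ) (hq1 : 1 ≤ q1) (hn : n = q1 * r + r1) : r ≤ n := by
  have := Nat.le_mul_of_pos_left r hq1
  omega

/-! ### Auxiliary machinery for the proof of Statement 13 -/

section CeqLemmas

variable {A : Type*} [CommRing A] {B' : Type*} [CommRing B']

/-- Coefficientwise congruence of power series up to degree `m`. -/
def ceq (m : ℕ) (f g : PowerSeries A) : Prop :=
  ∀ k, k ≤ m → PowerSeries.coeff k f = PowerSeries.coeff k g



lemma ceq_of_le {m m' : ℕ} {f g : PowerSeries A} (h : ceq m f g) (hm : m' ≤ m) :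
    ceq m' f g := fun k hk => h k (hk.trans hm)

lemma ceq_mul_left {m : ℕ} {f g : PowerSeries A} (h : ceq m f g) (u : PowerSeries A) :
    ceq m (u * f) (u * g) := by
  intro k hk
  rw [PowerSeries.coeff_mul, PowerSeries.coeff_mul]
  refine Finset.sum_congr rfl fun p hp => ?_
  rw [Finset.HasAntidiagonal.mem_antidiagonal] at hp
  rw [h p.2 (by omega)]

lemma ceq_mul_right {m : ℕ} {f g : PowerSeries A} (h : ceq m f g) (u : PowerSeries A) :
    ceq m (f * u) (g * u) := by
  rw [mul_comm f u, mul_comm g u]; exact ceq_mul_left h u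

lemma ceq_add {m : ℕ} {f g f' g' : PowerSeries A} (h : ceq m f g) (h' : ceq m f' g') :
    ceq m (f + f') (g + g') := by
  intro k hk; rw [map_add, map_add, h k hk, h' k hk]

lemma ceq_neg {m : ℕ} {f g : PowerSeries A} (h : ceq m f g) : ceq m (-f) (-g) := by
  intro k hk; rw [map_neg, map_neg, h k hk]

lemma ceq_map {m : ℕ} {f g : PowerSeries A} (π : A →+* B') (h : ceq m f g) :
    ceq m (PowerSeries.map π f) (PowerSeries.map π g) := by
  intro k hk; rw [PowerSeries.coeff_map, PowerSeries.coeff_map, h k hk]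

lemma ceq_cancel {m : ℕ} {u f g : PowerSeries A} (hu : PowerSeries.constantCoeff u = 1)
    (h : ceq m (u * f) (u * g)) : ceq m f g := by
  intro k
  induction k using Nat.strong_induction_on with
  | _ k ih =>
    intro hk
    have h2 := h k hk
    rw [PowerSeries.coeff_mul, PowerSeries.coeff_mul] at h2
    have hmem : ((0 : ℕ), k) ∈ Finset.HasAntidiagonal.antidiagonal k := by simp
    rw [← Finset.add_sum_erase _ _ hmem, ← Finset.add_sum_erase _ _ hmem] at h2
    have hrest : ∀ p ∈ (Finset.HasAntidiagonal.antidiagonal k).erase (0, k),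
        PowerSeries.coeff p.1 u * PowerSeries.coeff p.2 f
          = PowerSeries.coeff p.1 u * PowerSeries.coeff p.2 g := by
      intro p hp
      rw [Finset.mem_erase, Finset.HasAntidiagonal.mem_antidiagonal] at hp
      have hp2 : p.2 < k := by
        rcases hp with ⟨hne, hsum⟩
        rcases p with ⟨p1, p2⟩
        by_contra hc
        have e2 : p2 = k := by omega
        have e1 : p1 = 0 := by omega
        exact hne (by rw [e1, e2])
      rw [ih p.2 hp2 (by omega)]
    rw [Finset.sum_congr rfl hrest] at h2
    have h3 := add_right_cancel h2
    rwa [PowerSeries.coeff_zero_eq_constantCoeff, hu, one_mul, one_mul] at h3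

end CeqLemmas

section Pdser

variable {n r : ℕ}

/-- Coefficientwise partial derivative of a power series over `R n r`. -/
def pdser (v : Fin n ⊕ Fin r) (f : PowerSeries (R n r)) : PowerSeries (R n r) :=
  PowerSeries.mk fun k => pderiv v (PowerSeries.coeff k f)

lemma coeff_pdser (v : Fin n ⊕ Fin r) (f : PowerSeries (R n r)) (k : ℕ) :
    PowerSeries.coeff k (pdser v f) = pderiv v (PowerSeries.coeff k f) :=
  PowerSeries.coeff_mk _ _

lemma pdser_mul (v : Fin n ⊕ Fin r) (f g : PowerSeries (R n r)) :
    pdser v (f * g) = pdser v f * g + f * pdser v g := by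
  ext k
  simp only [pdser, PowerSeries.coeff_mk, map_add, PowerSeries.coeff_mul, map_sum,
    pderiv_mul, Finset.sum_add_distrib]

lemma pdser_one (v : Fin n ⊕ Fin r) : pdser v (1 : PowerSeries (R n r)) = 0 := by
  ext k
  simp only [pdser, PowerSeries.coeff_mk, PowerSeries.coeff_one, map_zero]
  split_ifs <;> simp

lemma pdser_X_pow (v : Fin n ⊕ Fin r) (e : ℕ) :
    pdser v ((PowerSeries.X : PowerSeries (R n r)) ^ e) = 0 := by
  ext k
  simp only [pdser, PowerSeries.coeff_mk, PowerSeries.coeff_X_pow, map_zero]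
  split_ifs <;> simp

lemma pdser_C_mul (v : Fin n ⊕ Fin r) (c : ℂ) (f : PowerSeries (R n r)) :
    pdser v (PowerSeries.C (algebraMap ℂ (R n r) c) * f)
      = PowerSeries.C (algebraMap ℂ (R n r) c) * pdser v f := by
  ext k
  simp only [pdser, PowerSeries.coeff_mk, PowerSeries.coeff_C_mul, MvPolynomial.algebraMap_eq,
    pderiv_C_mul]

lemma pdser_pow (v : Fin n ⊕ Fin r) (f : PowerSeries (R n r)) (s : ℕ) :
    pdser v (f ^ (s + 1)) = ((s : PowerSeries (R n r)) + 1) * f ^ s * pdser v f := by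
  induction s with
  | zero => simp [pdser_mul]
  | succ s ih =>
    rw [pow_succ, pdser_mul, ih]
    push_cast
    ring

lemma ceq_pdser {m : ℕ} (v : Fin n ⊕ Fin r) {f g : PowerSeries (R n r)} (h : ceq m f g) :
    ceq m (pdser v f) (pdser v g) := by
  intro k hk; rw [coeff_pdser, coeff_pdser, h k hk]

end Pdser
section SeriesFacts

lemma coeff_ser {A : Type*} [CommRing A] (m : ℕ) (cf : ℕ → A) (k : ℕ) :
    PowerSeries.coeff k (ser m cf) = if k = 0 then 1 else if k ≤ m then cf k else 0 :=
  PowerSeries.coeff_mk _ _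

lemma constantCoeff_ser {A : Type*} [CommRing A] (m : ℕ) (cf : ℕ → A) :
    PowerSeries.constantCoeff (ser m cf) = 1 := by
  rw [← PowerSeries.coeff_zero_eq_constantCoeff, coeff_ser]; simp

variable (n r : ℕ)

lemma pdser_Bser (j : Fin r) :
    pdser (Sum.inr j) (Bser n r) = (PowerSeries.X : PowerSeries (R n r)) ^ (r - (j : ℕ)) := by
  have hj := j.isLt
  ext k
  rw [coeff_pdser, PowerSeries.coeff_X_pow]
  simp only [Bser, coeff_ser]
  rcases Nat.eq_zero_or_pos k with hk | hk
  · subst hk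
    rw [if_pos rfl, if_neg (by omega)]
    simp
  · rw [if_neg (by omega)]
    by_cases hkr : k ≤ r
    · rw [if_pos hkr, dif_pos ⟨hk, hkr⟩, pderiv_X, Pi.single_apply]
      by_cases he : k = r - (j : ℕ)
      · rw [if_pos he, if_pos]
        congr 1
        refine Fin.ext ?_
        show (r : ℕ) - k = (j : ℕ)
        omega
      · rw [if_neg he, if_neg]
        intro hc
        injection hc with hc
        apply he
        have := congrArg Fin.val hc
        simp at this
        omega
    · rw [if_neg hkr, if_neg (by omega)]
      simp

lemma pdser_Aser (j : Fin r) : pdser (Sum.inr j) (Aser n r) = 0 := by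
  ext k
  rw [coeff_pdser]
  simp only [map_zero]
  simp only [Aser, coeff_ser]
  split_ifs with h1 h2 h3
  · simp
  · rw [pderiv_X, Pi.single_apply, if_neg (by simp)]
  · simp
  · simp

lemma constantCoeff_Bser : PowerSeries.constantCoeff (Bser n r) = 1 :=
  constantCoeff_ser _ _

lemma constantCoeff_Aser : PowerSeries.constantCoeff (Aser n r) = 1 :=
  constantCoeff_ser _ _

end SeriesFacts

section DerivFormula

variable {n r : ℕ}

lemma key_deriv (d : Fin n → R n r) (hd : dSpec n r d)
    (Binv : PowerSeries (R n r)) (hBinv : Bser n r * Binv = 1) (j : Fin r) :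
    ceq n (pdser (Sum.inr j) (Dser n r d))
      (-(PowerSeries.X ^ (r - (j : ℕ)) * Binv * Dser n r d)) := by
  have h2 : ceq n (Bser n r * pdser (Sum.inr j) (Dser n r d))
      (-(PowerSeries.X ^ (r - (j : ℕ)) * Dser n r d)) := by
    intro k hk
    have h := congrArg (pderiv (Sum.inr j)) (hd k hk)
    rw [← coeff_pdser, ← coeff_pdser, pdser_Aser, pdser_mul, pdser_Bser, map_add] at h
    rw [map_neg]
    have h0 : PowerSeries.coeff k (0 : PowerSeries (R n r)) = 0 := map_zero _
    rw [h0] at h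
    linear_combination h
  have h3 := ceq_mul_left h2 Binv
  intro k hk
  have h := h3 k hk
  rw [show Binv * (Bser n r * pdser (Sum.inr j) (Dser n r d))
      = (Bser n r * Binv) * pdser (Sum.inr j) (Dser n r d) by ring, hBinv, one_mul] at h
  rw [show Binv * -(PowerSeries.X ^ (r - (j : ℕ)) * Dser n r d)
      = -(PowerSeries.X ^ (r - (j : ℕ)) * Binv * Dser n r d) by ring] at h
  exact h

lemma deriv_formula (hr : 0 < r) (d : Fin n → R n r) (hd : dSpec n r d)
    (Binv : PowerSeries (R n r)) (hBinv : Bser n r * Binv = 1) (i : ℕ) (hi : i < r) :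
    ∀ s : ℕ, ceq n ((pdser (Sum.inr (⟨0, hr⟩ : Fin r)))^[s]
        (pdser (Sum.inr (⟨r - 1 - i, by omega⟩ : Fin r)) (Dser n r d)))
      (PowerSeries.C ((-1 : R n r) ^ (s + 1) * (Nat.factorial (s + 1) : R n r)) *
        (PowerSeries.X ^ (s * r + i + 1) * Binv ^ (s + 1) * Dser n r d)) := by
  intro s
  induction s with
  | zero =>
    have h := key_deriv d hd Binv hBinv (⟨r - 1 - i, by omega⟩ : Fin r)
    have he : r - ((⟨r - 1 - i, by omega⟩ : Fin r) : ℕ) = i + 1 := by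
      simp only [Fin.val_mk]; omega
    rw [he] at h
    have heq : PowerSeries.C ((-1 : R n r) ^ (0 + 1) * (Nat.factorial (0 + 1) : R n r)) *
        (PowerSeries.X ^ (0 * r + i + 1) * Binv ^ (0 + 1) * Dser n r d)
        = -(PowerSeries.X ^ (i + 1) * Binv * Dser n r d) := by
      have : ((-1 : R n r) ^ (0 + 1) * (Nat.factorial (0 + 1) : R n r)) = -1 := by
        norm_num [Nat.factorial]
      rw [this, map_neg, _root_.map_one, show 0 * r + i + 1 = i + 1 by ring]
      ring
    rw [Function.iterate_zero_apply, heq]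
    exact h
  | succ s ih =>
    set v : Fin n ⊕ Fin r := Sum.inr (⟨0, hr⟩ : Fin r) with hv
    have hstep := ceq_pdser v ih
    set D := Dser n r d with hD
    set m := s * r + i + 1 with hm
    set Cc := PowerSeries.C ((-1 : R n r) ^ (s + 1) * (Nat.factorial (s + 1) : R n r)) with hCc
    have hB0 : pdser v (Bser n r) = (PowerSeries.X : PowerSeries (R n r)) ^ r := by
      rw [hv, pdser_Bser]
      norm_num
    have hBinv' : pdser v Binv = -(PowerSeries.X ^ r * Binv ^ 2) := by
      have h0 : pdser v (Bser n r * Binv) = 0 := by rw [hBinv, pdser_one]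
      rw [pdser_mul, hB0] at h0
      have hBB : Bser n r * pdser v Binv = -(PowerSeries.X ^ r * Binv) :=
        eq_neg_of_add_eq_zero_right h0
      calc pdser v Binv = (Bser n r * Binv) * pdser v Binv := by rw [hBinv, one_mul]
        _ = Binv * (Bser n r * pdser v Binv) := by ring
        _ = Binv * -(PowerSeries.X ^ r * Binv) := by rw [hBB]
        _ = -(PowerSeries.X ^ r * Binv ^ 2) := by ring
    have hrhs : pdser v (Cc * (PowerSeries.X ^ m * Binv ^ (s + 1) * D))
        = Cc * (PowerSeries.X ^ m *
            (((s : PowerSeries (R n r)) + 1) * Binv ^ s * -(PowerSeries.X ^ r * Binv ^ 2)) * D)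
          + Cc * (PowerSeries.X ^ m * Binv ^ (s + 1)) * pdser v D := by
      have hC' : Cc = PowerSeries.C
          (algebraMap ℂ (R n r) ((-1 : ℂ) ^ (s + 1) * (Nat.factorial (s + 1) : ℂ))) := by
        rw [hCc]
        congr 1
        rw [_root_.map_mul, map_pow, map_neg, _root_.map_one, map_natCast]
      rw [hC', pdser_C_mul, pdser_mul, pdser_mul, pdser_X_pow, pdser_pow, hBinv']
      ring
    rw [hrhs] at hstep
    have hkey := key_deriv d hd Binv hBinv (⟨0, hr⟩ : Fin r)
    have he0 : r - ((⟨0, hr⟩ : Fin r) : ℕ) = r := by simp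
    rw [he0] at hkey
    have hrep := ceq_mul_left hkey (Cc * (PowerSeries.X ^ m * Binv ^ (s + 1)))
    have hstep2 : ceq n ((pdser v)^[s + 1]
        (pdser (Sum.inr (⟨r - 1 - i, by omega⟩ : Fin r)) D))
        (Cc * (PowerSeries.X ^ m *
            (((s : PowerSeries (R n r)) + 1) * Binv ^ s * -(PowerSeries.X ^ r * Binv ^ 2)) * D)
          + Cc * (PowerSeries.X ^ m * Binv ^ (s + 1)) *
            -(PowerSeries.X ^ r * Binv * D)) := by
      intro k hk
      rw [Function.iterate_succ_apply', hstep k hk, map_add, map_add, hrep k hk]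
    have hfin : Cc * (PowerSeries.X ^ m *
            (((s : PowerSeries (R n r)) + 1) * Binv ^ s * -(PowerSeries.X ^ r * Binv ^ 2)) * D)
          + Cc * (PowerSeries.X ^ m * Binv ^ (s + 1)) * -(PowerSeries.X ^ r * Binv * D)
        = PowerSeries.C ((-1 : R n r) ^ (s + 1 + 1) * (Nat.factorial (s + 1 + 1) : R n r)) *
            (PowerSeries.X ^ ((s + 1) * r + i + 1) * Binv ^ (s + 1 + 1) * D) := by
      have hcc : PowerSeries.C ((-1 : R n r) ^ (s + 1 + 1) * (Nat.factorial (s + 1 + 1) : R n r))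
          = Cc * (-((s : PowerSeries (R n r)) + 2)) := by
        have h1 : ((-1 : R n r) ^ (s + 1 + 1) * (Nat.factorial (s + 1 + 1) : R n r))
            = ((-1 : R n r) ^ (s + 1) * (Nat.factorial (s + 1) : R n r)) * (-((s : R n r) + 2)) := by
          rw [Nat.factorial_succ]
          push_cast
          ring
        rw [h1, _root_.map_mul]
        congr 1
        simp [map_ofNat]
      have hexp : (s + 1) * r + i + 1 = m + r := by rw [hm]; ring
      rw [hcc, hexp, pow_add]
      ring
    rw [hfin] at hstep2
    exact hstep2

end DerivFormula

section IdealLemmas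

variable {n r : ℕ}

lemma coeff_Dser (d : Fin n → R n r) (k : ℕ) (h1 : 1 ≤ k) (h2 : k ≤ n) :
    PowerSeries.coeff k (Dser n r d) = d ⟨n - k, by omega⟩ := by
  rw [Dser, coeff_ser, if_neg (by omega), if_pos h2, dif_pos ⟨h1, h2⟩]

lemma psi_formula (hr : 0 < r) (hrn : r ≤ n) (d : Fin n → R n r) (hd : dSpec n r d)
    (Binv : PowerSeries (R n r)) (hBinv : Bser n r * Binv = 1)
    (s i : ℕ) (hi : i < r) (hs : s * r + i ≤ n) :
    psi n r hr hrn d (s * r + i)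
      = (-1 : R n r) ^ s * (Nat.factorial s : R n r) *
          PowerSeries.coeff (n - s * r - i) (Binv ^ s * Dser n r d) := by
  cases s with
  | zero =>
    rw [psi, dif_pos (show 0 * r + i < r by omega)]
    rw [pow_zero, Nat.factorial_zero, Nat.cast_one, one_mul, one_mul, pow_zero, one_mul]
    rw [coeff_Dser d (n - 0 * r - i) (by omega) (by omega)]
    congr 1
    refine Fin.ext ?_
    show 0 * r + i = n - (n - 0 * r - i)
    omega
  | succ s =>
    have hrs : r ≤ (s + 1) * r := Nat.le_mul_of_pos_left r (by omega)
    rw [psi, dif_neg (show ¬ ((s + 1) * r + i < r) by omega)]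
    have hdiv : ((s + 1) * r + i) / r = s + 1 := by
      rw [show (s + 1) * r + i = r * (s + 1) + i by ring, Nat.mul_add_div hr,
        Nat.div_eq_of_lt hi, add_zero]
    have hmod : ((s + 1) * r + i) % r = i := by
      rw [show (s + 1) * r + i = r * (s + 1) + i by ring, Nat.mul_add_mod,
        Nat.mod_eq_of_lt hi]
    rw [hdiv, Nat.add_sub_cancel]
    simp only [hmod]
    have hbr : d (⟨r - 1, by omega⟩ : Fin n)
        = PowerSeries.coeff (n - r + 1) (Dser n r d) := by
      rw [coeff_Dser d (n - r + 1) (by omega) (by omega)]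
      congr 1
      refine Fin.ext ?_
      show r - 1 = n - (n - r + 1)
      omega
    have hiter : ∀ (t : ℕ) (f : PowerSeries (R n r)),
        (fun q => pderiv (Sum.inr (⟨0, hr⟩ : Fin r)) q)^[t]
            (PowerSeries.coeff (n - r + 1) f)
          = PowerSeries.coeff (n - r + 1)
              ((pdser (Sum.inr (⟨0, hr⟩ : Fin r)))^[t] f) := by
      intro t
      induction t with
      | zero => intro f; rfl
      | succ t ih =>
        intro f
        rw [Function.iterate_succ_apply, Function.iterate_succ_apply]
        rw [show pderiv (Sum.inr (⟨0, hr⟩ : Fin r))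
            ((PowerSeries.coeff (n - r + 1)) f)
          = PowerSeries.coeff (n - r + 1)
              (pdser (Sum.inr (⟨0, hr⟩ : Fin r)) f) from (coeff_pdser _ _ _).symm]
        exact ih _
    rw [hbr, ← coeff_pdser, hiter]
    have hform := deriv_formula hr d hd Binv hBinv i hi s (n - r + 1) (by omega)
    rw [hform]
    have harith : n - r + 1 = (n - (s + 1) * r - i) + (s * r + i + 1) := by
      have he : (s + 1) * r = s * r + r := by ring
      omega
    rw [PowerSeries.coeff_C_mul, mul_assoc (PowerSeries.X ^ (s * r + i + 1)),
      harith, PowerSeries.coeff_X_pow_mul]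

lemma coeff_Bser_pow (t k : ℕ) (hr : 0 < r) (h : t * r < k) :
    PowerSeries.coeff k (Bser n r ^ t) = 0 := by
  induction t generalizing k with
  | zero =>
    rw [pow_zero, PowerSeries.coeff_one, if_neg (by omega)]
  | succ t ih =>
    rw [pow_succ, PowerSeries.coeff_mul]
    refine Finset.sum_eq_zero fun p hp => ?_
    rw [Finset.HasAntidiagonal.mem_antidiagonal] at hp
    have he : (t + 1) * r = t * r + r := by ring
    by_cases h1 : t * r < p.1
    · rw [ih _ h1, zero_mul]
    · have h2 : r < p.2 := by omega
      rw [show PowerSeries.coeff p.2 (Bser n r) = 0 by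
        rw [Bser, coeff_ser, if_neg (by omega), if_neg (by omega)], mul_zero]

lemma gen_mem (hr : 0 < r) (hrn : r ≤ n) (d : Fin n → R n r) (hd : dSpec n r d)
    (Binv : PowerSeries (R n r)) (hBinv : Bser n r * Binv = 1)
    (q1 r1 : ℕ) (hq1 : 1 ≤ q1) (hn : n = q1 * r + r1) (h1 : 0 < r1)
    (s i : ℕ) (hsq : s + 1 ≤ q1) (hi : i < r) :
    PowerSeries.coeff (n - s * r - i) (Binv ^ s * Dser n r d)
      ∈ Ideal.span (Set.range fun m : Fin (q1 * r) => psi n r hr hrn d (m : ℕ)) := by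
  have hsr : s * r + r ≤ q1 * r := by
    calc s * r + r = (s + 1) * r := by ring
      _ ≤ q1 * r := Nat.mul_le_mul_right r hsq
  have hpsi := psi_formula hr hrn d hd Binv hBinv s i hi (by omega)
  have hmem : psi n r hr hrn d (s * r + i)
      ∈ Ideal.span (Set.range fun m : Fin (q1 * r) => psi n r hr hrn d (m : ℕ)) :=
    Ideal.subset_span ⟨⟨s * r + i, by omega⟩, rfl⟩
  rw [hpsi] at hmem
  have hfac : ((-1 : R n r) ^ s * (algebraMap ℂ (R n r) ((Nat.factorial s : ℂ)⁻¹)))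
      * ((-1 : R n r) ^ s * (Nat.factorial s : R n r)) = 1 := by
    have hsgn : (-1 : R n r) ^ s * (-1 : R n r) ^ s = 1 := by
      rw [← pow_add, ← two_mul, pow_mul]
      norm_num
    have hfct : (algebraMap ℂ (R n r) ((Nat.factorial s : ℂ)⁻¹))
        * (Nat.factorial s : R n r) = 1 := by
      rw [show (Nat.factorial s : R n r) = algebraMap ℂ (R n r) (Nat.factorial s : ℂ) from
        (map_natCast _ _).symm, ← _root_.map_mul,
        inv_mul_cancel₀ (Nat.cast_ne_zero.mpr (Nat.factorial_ne_zero s)), _root_.map_one]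
    calc ((-1 : R n r) ^ s * (algebraMap ℂ (R n r) ((Nat.factorial s : ℂ)⁻¹)))
        * ((-1 : R n r) ^ s * (Nat.factorial s : R n r))
        = ((-1 : R n r) ^ s * (-1 : R n r) ^ s) *
            ((algebraMap ℂ (R n r) ((Nat.factorial s : ℂ)⁻¹)) * (Nat.factorial s : R n r)) := by
          ring
      _ = 1 := by rw [hsgn, hfct, one_mul]
  have := Ideal.mul_mem_left _ ((-1 : R n r) ^ s * (algebraMap ℂ (R n r) ((Nat.factorial s : ℂ)⁻¹))) hmem
  rwa [show ((-1 : R n r) ^ s * (algebraMap ℂ (R n r) ((Nat.factorial s : ℂ)⁻¹)))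
      * ((-1 : R n r) ^ s * (Nat.factorial s : R n r) *
          PowerSeries.coeff (n - s * r - i) (Binv ^ s * Dser n r d))
    = PowerSeries.coeff (n - s * r - i) (Binv ^ s * Dser n r d) by
      rw [← mul_assoc, hfac, one_mul]] at this

lemma main_mem (hr : 0 < r) (hrn : r ≤ n) (d : Fin n → R n r) (hd : dSpec n r d)
    (Binv : PowerSeries (R n r)) (hBinv : Bser n r * Binv = 1)
    (q1 r1 : ℕ) (hq1 : 1 ≤ q1) (hn : n = q1 * r + r1) (h1 : 0 < r1) :
    ∀ k, r1 < k → k ≤ n →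
      PowerSeries.coeff k (Binv ^ (q1 - 1) * Dser n r d)
        ∈ Ideal.span (Set.range fun m : Fin (q1 * r) => psi n r hr hrn d (m : ℕ)) := by
  intro k
  induction k using Nat.strong_induction_on with
  | _ k ih =>
    intro hk1 hk2
    set s := (n - k) / r with hsdef
    set i := (n - k) % r with hidef
    have hir : i < r := Nat.mod_lt _ hr
    have hsi : s * r + i = n - k := by
      rw [mul_comm s r]
      exact Nat.div_add_mod (n - k) r
    have hsq : s + 1 ≤ q1 := by
      by_contra hc
      push_neg at hc
      have hq : q1 * r ≤ s * r := Nat.mul_le_mul_right r (by omega)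
      omega
    have hgen : PowerSeries.coeff k (Binv ^ s * Dser n r d)
        ∈ Ideal.span (Set.range fun m : Fin (q1 * r) => psi n r hr hrn d (m : ℕ)) := by
      rw [show k = n - s * r - i by omega]
      exact gen_mem hr hrn d hd Binv hBinv q1 r1 hq1 hn h1 s i hsq hir
    set t := q1 - 1 - s with htdef
    have hts : t + s = q1 - 1 := by omega
    have hid : Binv ^ s * Dser n r d
        = Bser n r ^ t * (Binv ^ (q1 - 1) * Dser n r d) := by
      have hBB : Bser n r ^ t * Binv ^ t = 1 := by rw [← mul_pow, hBinv, one_pow]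
      calc Binv ^ s * Dser n r d
          = (Bser n r ^ t * Binv ^ t) * (Binv ^ s * Dser n r d) := by rw [hBB, one_mul]
        _ = Bser n r ^ t * (Binv ^ t * Binv ^ s * Dser n r d) := by ring
        _ = Bser n r ^ t * (Binv ^ (t + s) * Dser n r d) := by rw [pow_add]
        _ = Bser n r ^ t * (Binv ^ (q1 - 1) * Dser n r d) := by rw [hts]
    have hcoeff : PowerSeries.coeff k (Binv ^ s * Dser n r d)
        = ∑ p ∈ Finset.HasAntidiagonal.antidiagonal k, PowerSeries.coeff p.1 (Bser n r ^ t)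
            * PowerSeries.coeff p.2 (Binv ^ (q1 - 1) * Dser n r d) := by
      rw [hid, PowerSeries.coeff_mul]
    rw [← Finset.add_sum_erase _ _ (show ((0 : ℕ), k) ∈ Finset.HasAntidiagonal.antidiagonal k by simp)]
      at hcoeff
    have hc0 : PowerSeries.coeff 0 (Bser n r ^ t) = 1 := by
      rw [PowerSeries.coeff_zero_eq_constantCoeff, map_pow, constantCoeff_Bser, one_pow]
    rw [hc0, one_mul] at hcoeff
    have htr : t * r + s * r + r = q1 * r := by
      have hq : t + s + 1 = q1 := by omega
      calc t * r + s * r + r = (t + s + 1) * r := by ring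
        _ = q1 * r := by rw [hq]
    have hsum : ∑ p ∈ (Finset.HasAntidiagonal.antidiagonal k).erase (0, k),
        PowerSeries.coeff p.1 (Bser n r ^ t)
          * PowerSeries.coeff p.2 (Binv ^ (q1 - 1) * Dser n r d)
        ∈ Ideal.span (Set.range fun m : Fin (q1 * r) => psi n r hr hrn d (m : ℕ)) := by
      refine Ideal.sum_mem _ fun p hp => ?_
      rw [Finset.mem_erase, Finset.HasAntidiagonal.mem_antidiagonal] at hp
      obtain ⟨hne, hpk⟩ := hp
      have hp1 : 0 < p.1 := by
        rcases Nat.eq_zero_or_pos p.1 with h0 | h0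
        · exact absurd (Prod.ext h0 (by omega)) hne
        · exact h0
      by_cases hdeg : t * r < p.1
      · rw [coeff_Bser_pow _ _ hr hdeg, zero_mul]
        exact Ideal.zero_mem _
      · push_neg at hdeg
        exact Ideal.mul_mem_left _ _ (ih p.2 (by omega) (by omega) (by omega))
    have hfin : PowerSeries.coeff k (Binv ^ (q1 - 1) * Dser n r d)
        = PowerSeries.coeff k (Binv ^ s * Dser n r d)
          - ∑ p ∈ (Finset.HasAntidiagonal.antidiagonal k).erase (0, k),
              PowerSeries.coeff p.1 (Bser n r ^ t)
                * PowerSeries.coeff p.2 (Binv ^ (q1 - 1) * Dser n r d) := by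
      linear_combination -hcoeff
    rw [hfin]
    exact Ideal.sub_mem _ hgen hsum

end IdealLemmas

/-- Proposition 3.12: `φ_i ≡ ψ_{q_1r+i} (mod (ψ_0,…,ψ_{q_1r-1}))` for
`0 ≤ i ≤ r_1-1`, where `ψ_{q_1r+i} = β_{(q_1-1)r+r_1+i}` and `φ_i` is the substitution
`g_k ↦ γ_{n-k}` applied to `w_i`. -/
theorem stmt13 (n r q1 r1 : ℕ) (hq1 : 1 ≤ q1) (h1 : 0 < r1) (h2 : r1 < r)
    (hn : n = q1 * r + r1)
    (d : Fin n → R n r) (hd : dSpec n r d)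
    (Binv : PowerSeries (R n r)) (hBinv : Bser n r * Binv = 1)
    (α β : ℕ → R n r)
    (hα : ∀ k, 1 ≤ k → k < n →
      α (n - k) = PowerSeries.coeff k (Binv ^ q1 * Dhatser n r d))
    (hβ : ∀ k, k < n →
      PowerSeries.coeff k
          (ser (n - 1) (fun j => α (n - j)) * ser (n - 1) fun j => β (n - j))
        = if k = 0 then 1 else 0)
    (γ : ℕ → R n r)
    (hγ : ∀ k, 1 ≤ k → k ≤ r1 →
      γ (n - k) = PowerSeries.coeff k (Binv ^ q1 * Aser n r))
    (w : Fin r → R r1 r) (hw : wSpec r1 r w) :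
    ∀ i : Fin r1,
      subst n r r1 γ (w (Fin.castLE (by omega : r1 ≤ r) i))
          - β ((q1 - 1) * r + r1 + (i : ℕ)) ∈
        Ideal.span (Set.range fun m : Fin (q1 * r) =>
          psi n r (by omega) (rle q1 r r1 n (by omega) hn) d (m : ℕ)) := by
  have hr : 0 < r := by omega
  have hrn : r ≤ n := rle q1 r r1 n hq1 hn
  have hn1 : 1 ≤ n := by omega
  have hrn1 : r ≤ n - 1 := by
    have : r ≤ q1 * r := Nat.le_mul_of_pos_left r (by omega)
    omega
  intro i
  set I : Ideal (R n r) := Ideal.span (Set.range fun m : Fin (q1 * r) =>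
    psi n r (by omega) (rle q1 r r1 n (by omega) hn) d (m : ℕ)) with hI
  set π : R n r →+* R n r ⧸ I := Ideal.Quotient.mk I with hπ
  -- constant coefficients
  have hccBinv : PowerSeries.constantCoeff Binv = 1 := by
    have h := congrArg (PowerSeries.constantCoeff (R := R n r)) hBinv
    rw [_root_.map_mul, constantCoeff_Bser, one_mul, _root_.map_one] at h
    exact h
  -- hd as a ceq
  have hdc : ceq n (Bser n r * Dser n r d) (Aser n r) := hd
  -- Lemma A' : high coefficients of Binv^q1 * Aser lie in I
  have hceqAD : ceq n (Binv ^ q1 * Aser n r) (Binv ^ (q1 - 1) * Dser n r d) := by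
    have h := ceq_mul_left hdc (Binv ^ q1)
    have hEq : Binv ^ q1 * (Bser n r * Dser n r d) = Binv ^ (q1 - 1) * Dser n r d := by
      have hq : q1 - 1 + 1 = q1 := by omega
      calc Binv ^ q1 * (Bser n r * Dser n r d)
          = (Bser n r * Binv) * (Binv ^ (q1 - 1) * Dser n r d) := by
            conv_lhs => rw [← hq]
            ring
        _ = Binv ^ (q1 - 1) * Dser n r d := by rw [hBinv, one_mul]
    intro k hk
    rw [← hEq]
    exact (h k hk).symm
  have hIA : ∀ k, r1 < k → k ≤ n →
      PowerSeries.coeff k (Binv ^ q1 * Aser n r) ∈ I := by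
    intro k hk1 hk2
    rw [hceqAD k hk2]
    exact main_mem (by omega) (rle q1 r r1 n (by omega) hn) d hd Binv hBinv
      q1 r1 hq1 hn h1 k hk1 hk2
  -- substitution ring hom
  set σ : R r1 r →+* R n r := (subst n r r1 γ).toRingHom with hσ
  have hmapB : PowerSeries.map σ (Bser r1 r) = Bser n r := by
    refine PowerSeries.ext fun k => ?_
    rw [PowerSeries.coeff_map]
    simp only [Bser, coeff_ser]
    by_cases hk0 : k = 0
    · subst hk0; simp
    · by_cases hkr : k ≤ r
      · simp only [if_neg hk0, if_pos hkr,
          dif_pos (⟨by omega, hkr⟩ : 1 ≤ k ∧ k ≤ r)]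
        simp [hσ, subst, aeval_X]
      · simp only [if_neg hk0, if_neg hkr]
        exact map_zero σ
  set Γ : PowerSeries (R n r) := PowerSeries.map σ (Gser r1 r) with hΓdef
  have hΓcoeff : ∀ k, PowerSeries.coeff k Γ
      = if k = 0 then 1 else if k ≤ r1 then γ (n - k) else 0 := by
    intro k
    rw [hΓdef, PowerSeries.coeff_map]
    simp only [Gser, coeff_ser]
    by_cases hk0 : k = 0
    · subst hk0; simp
    · by_cases hkr : k ≤ r1
      · simp only [if_neg hk0, if_pos hkr,
          dif_pos (⟨by omega, hkr⟩ : 1 ≤ k ∧ k ≤ r1)]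
        have hx : σ (X (Sum.inl (⟨k - 1, by omega⟩ : Fin r1))) = γ (n - (k - 1 + 1)) := by
          simp [hσ, subst, aeval_X]
        rw [hx, show k - 1 + 1 = k by omega]
      · simp only [if_neg hk0, if_neg hkr]
        exact map_zero σ
  have hGW : ceq r (Γ * PowerSeries.map σ (Wser r1 r w)) (Bser n r) := by
    have hwc : ceq r (Gser r1 r * Wser r1 r w) (Bser r1 r) := hw
    have h := ceq_map σ hwc
    rw [_root_.map_mul, hmapB] at h
    exact h
  -- pass to the quotient
  set Bq := PowerSeries.map π (Bser n r) with hBq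
  set Dq := PowerSeries.map π (Dser n r d) with hDq
  set Vq := PowerSeries.map π Binv with hVq
  set Wq := PowerSeries.map π (PowerSeries.map σ (Wser r1 r w)) with hWq
  set Γq := PowerSeries.map π Γ with hΓq
  set Aq' := PowerSeries.map π (ser (n - 1) fun j => α (n - j)) with hAq'
  set Bq' := PowerSeries.map π (ser (n - 1) fun j => β (n - j)) with hBq'
  have hBinvQ : Bq * Vq = 1 := by
    rw [hBq, hVq, ← _root_.map_mul, hBinv, _root_.map_one]
  -- the β side
  have c3R : ceq (n - 1) (ser (n - 1) fun j => α (n - j)) (Binv ^ q1 * Dhatser n r d) := by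
    intro k hk
    rw [coeff_ser]
    rcases Nat.eq_zero_or_pos k with hk0 | hk0
    · subst hk0
      rw [if_pos rfl, PowerSeries.coeff_zero_eq_constantCoeff, _root_.map_mul, map_pow,
        hccBinv, one_pow, one_mul]
      exact (constantCoeff_ser _ _).symm
    · rw [if_neg (by omega), if_pos hk, hα k (by omega) (by omega)]
  have c4R : ceq (n - 1) ((ser (n - 1) fun j => α (n - j)) * ser (n - 1) fun j => β (n - j))
      1 := by
    intro k hk
    rw [hβ k (by omega), PowerSeries.coeff_one]
  have c5R : ceq (n - 1) ((Binv ^ q1 * Dhatser n r d) * ser (n - 1) fun j => β (n - j)) 1 :=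
    fun k hk => ((ceq_mul_right c3R (ser (n - 1) fun j => β (n - j))) k hk).symm.trans
      (c4R k hk)
  have c6R : ceq (n - 1) (Dhatser n r d * ser (n - 1) fun j => β (n - j))
      (Bser n r ^ q1) := by
    intro k hk
    have h := (ceq_mul_left c5R (Bser n r ^ q1)) k hk
    rw [mul_one] at h
    rw [show Bser n r ^ q1 * ((Binv ^ q1 * Dhatser n r d) * ser (n - 1) fun j => β (n - j))
        = (Bser n r * Binv) ^ q1 * (Dhatser n r d * ser (n - 1) fun j => β (n - j)) by ring,
      hBinv, one_pow, one_mul] at h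
    exact h
  have hhat : ceq (n - 1) (Dhatser n r d) (Dser n r d) := by
    intro k hk
    simp only [Dhatser, Dser, coeff_ser]
    by_cases hk0 : k = 0
    · subst hk0; simp
    · have hkn : k ≤ n := by omega
      simp only [if_neg hk0, if_pos hk, if_pos hkn,
        dif_pos (⟨by omega, hk⟩ : 1 ≤ k ∧ k ≤ n - 1),
        dif_pos (⟨by omega, hkn⟩ : 1 ≤ k ∧ k ≤ n)]
  have c7R : ceq (n - 1) (Dser n r d * ser (n - 1) fun j => β (n - j)) (Bser n r ^ q1) :=
    fun k hk => ((ceq_mul_right hhat (ser (n - 1) fun j => β (n - j))) k hk).symm.trans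
      (c6R k hk)
  have c7Q : ceq (n - 1) (Dq * Bq') (Bq ^ q1) := by
    have h := ceq_map π c7R
    rw [_root_.map_mul, map_pow] at h
    exact h
  -- the w side, in the quotient
  have c8Q : ceq r (Γq * Wq) Bq := by
    have h := ceq_map π hGW
    rw [_root_.map_mul] at h
    exact h
  have c9 : ceq n Γq (PowerSeries.map π (Binv ^ q1 * Aser n r)) := by
    intro k hk
    rw [hΓq, PowerSeries.coeff_map, hΓcoeff k, PowerSeries.coeff_map]
    rcases Nat.eq_zero_or_pos k with hk0 | hk0
    · subst hk0
      rw [if_pos rfl, PowerSeries.coeff_zero_eq_constantCoeff, _root_.map_mul, map_pow,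
        hccBinv, one_pow, one_mul, constantCoeff_Aser, _root_.map_one]
    · by_cases hkr1 : k ≤ r1
      · rw [if_neg (by omega), if_pos hkr1, hγ k (by omega) hkr1]
      · rw [if_neg (by omega), if_neg hkr1, map_zero]
        exact (Ideal.Quotient.eq_zero_iff_mem.mpr (hIA k (by omega) hk)).symm
  have c10 : ceq n Γq (Vq ^ (q1 - 1) * Dq) := by
    have h := ceq_map π hceqAD
    rw [show PowerSeries.map π (Binv ^ (q1 - 1) * Dser n r d) = Vq ^ (q1 - 1) * Dq from by
      rw [_root_.map_mul, map_pow]] at h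
    exact fun k hk => (c9 k hk).trans (h k hk)
  have c11 : ceq r ((Vq ^ (q1 - 1) * Dq) * Wq) Bq :=
    fun k hk => ((ceq_mul_right (ceq_of_le c10 hrn) Wq) k hk).symm.trans (c8Q k hk)
  have c12 : ceq r (Dq * Wq) (Bq ^ q1) := by
    intro k hk
    have h := (ceq_mul_left c11 (Bq ^ (q1 - 1))) k hk
    have hq : q1 - 1 + 1 = q1 := by omega
    rw [show Bq ^ (q1 - 1) * ((Vq ^ (q1 - 1) * Dq) * Wq)
        = (Bq * Vq) ^ (q1 - 1) * (Dq * Wq) by ring, hBinvQ, one_pow, one_mul] at h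
    rw [show Bq ^ (q1 - 1) * Bq = Bq ^ q1 by rw [← pow_succ, hq]] at h
    exact h
  have c13 : ceq r (Dq * Wq) (Dq * Bq') :=
    fun k hk => (c12 k hk).trans ((ceq_of_le c7Q hrn1) k hk).symm
  have hccD : PowerSeries.constantCoeff Dq = 1 := by
    rw [hDq, ← PowerSeries.coeff_zero_eq_constantCoeff, PowerSeries.coeff_map,
      PowerSeries.coeff_zero_eq_constantCoeff, Dser, constantCoeff_ser, _root_.map_one]
  have c14 : ceq r Wq Bq' := ceq_cancel hccD c13
  -- evaluate at k = r - i
  have hiv : (i : ℕ) < r1 := i.isLt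
  have hk1 : 1 ≤ r - (i : ℕ) := by omega
  have hk2 : r - (i : ℕ) ≤ r := by omega
  have hfinal := c14 (r - (i : ℕ)) hk2
  rw [hWq, hBq', PowerSeries.coeff_map, PowerSeries.coeff_map, PowerSeries.coeff_map]
    at hfinal
  have hWcoeff : PowerSeries.coeff (r - (i : ℕ)) (Wser r1 r w)
      = w (Fin.castLE (by omega : r1 ≤ r) i) := by
    simp only [Wser, coeff_ser]
    rw [if_neg (by omega), if_pos hk2, dif_pos ⟨hk1, hk2⟩]
    congr 1
    refine Fin.ext ?_
    show r - (r - (i : ℕ)) = (i : ℕ)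
    omega
  have hBcoeff : PowerSeries.coeff (r - (i : ℕ)) (ser (n - 1) fun j => β (n - j))
      = β ((q1 - 1) * r + r1 + (i : ℕ)) := by
    rw [coeff_ser, if_neg (by omega), if_pos (by omega)]
    congr 1
    have hqr : (q1 - 1) * r + r = q1 * r := by
      have hq : q1 - 1 + 1 = q1 := by omega
      calc (q1 - 1) * r + r = (q1 - 1 + 1) * r := by ring
        _ = q1 * r := by rw [hq]
    omega
  rw [hWcoeff, hBcoeff] at hfinal
  have := Ideal.Quotient.eq.mp hfinal
  exact this

end TB
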